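/- For n ∈ ℕ and 1 ≤ p < ∞, 1 ≤ q < ∞, let T_n : M_n(ℂ) → ℂ^n be the linear map T_n(x) = ( Tr((ε_{1i} + ε_{i1}) x) )_{i=1}^n, where ε_{ij} are matrix units. Let S : M_n(ℂ) → ℂ^n be any linear map such that S + T_n and S − T_n are both completely positive (with ℂ^n as the diagonal subalgebra ℓ_∞^n, and the ℓ_q norm on the target). Then the operator norm of S from the Schatten p-class S_p(M_n) to ℓ_q^n satisfies ‖S‖ ≥ n^{1/(2q)}. -/

import Mathlib

open Matrix Kronecker ComplexOrder

/-- Schatten `p`-norm of a complex `k × k` matrix: `(∑ sᵢ^p)^(1/p)` where `sᵢ` are the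
singular values (square roots of the eigenvalues of `aᴴ * a`). -/
noncomputable def sNorm (p : ℝ) {k : ℕ} (a : Matrix (Fin k) (Fin k) ℂ) : ℝ :=
  (∑ i, Real.sqrt ((Matrix.posSemidef_conjTranspose_mul_self a).1.eigenvalues i) ^ p) ^ (1 / p)

/-- A linear map `Φ : M_N(ℂ) → ℂ^N` (with `ℂ^N` viewed as the diagonal subalgebra `ℓ_∞^N`)
is completely positive if every amplification `Φ ⊗ id_{M_m}` preserves positivity: for every
positive semidefinite `x ∈ M_m(M_N)` (modeled with index type `Fin m × Fin N`, the `(i,j)`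
block being `(a,b) ↦ x (i,a) (j,b)`) and every coordinate `t`, the `m × m` matrix
`[Φ(x_{ij}) t]` is positive semidefinite. -/
def IsCompletelyPositive {N : ℕ}
    (Φ : Matrix (Fin N) (Fin N) ℂ →ₗ[ℂ] (Fin N → ℂ)) : Prop :=
  ∀ (m : ℕ) (x : Matrix (Fin m × Fin N) (Fin m × Fin N) ℂ), x.PosSemidef →
    ∀ t : Fin N,
      (Matrix.of fun i j : Fin m =>
        Φ (Matrix.of fun a b : Fin N => x (i, a) (j, b)) t).PosSemidef

lemma entry_nonneg_of_psd_one {M : Matrix (Fin 1) (Fin 1) ℂ} (h : M.PosSemidef) :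
    0 ≤ M 0 0 := by
  exact h.diag_nonneg

lemma rankOne_psd {N : ℕ} (w : Fin N → ℂ) :
    (Matrix.of fun a b => w a * (starRingEnd ℂ) (w b)).PosSemidef := by
  have h := Matrix.posSemidef_self_mul_conjTranspose
    (Matrix.of fun a (_ : Fin 1) => w a)
  convert h using 1
  ext a b
  simp [Matrix.mul_apply, Matrix.conjTranspose_apply]

lemma trace_stdBasis_mul {N : ℕ} (i j : Fin N) (x : Matrix (Fin N) (Fin N) ℂ) :
    Matrix.trace (Matrix.single i j (1:ℂ) * x) = x j i := by
  rw [Matrix.trace]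
  rw [Finset.sum_eq_single i]
  · simp
  · intro k _ hk
    exact Matrix.single_mul_apply_of_ne (c := 1) i j k k hk x
  · simp

lemma cp_pos {N : ℕ} (Φ : Matrix (Fin N) (Fin N) ℂ →ₗ[ℂ] (Fin N → ℂ))
    (hΦ : IsCompletelyPositive Φ) (x : Matrix (Fin N) (Fin N) ℂ)
    (hx : x.PosSemidef) (t : Fin N) : 0 ≤ Φ x t := by
  have hx' : (x.submatrix (Equiv.uniqueProd (Fin N) (Fin 1))
      (Equiv.uniqueProd (Fin N) (Fin 1))).PosSemidef :=
    (Matrix.posSemidef_submatrix_equiv _).2 hx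
  have h := hΦ 1 _ hx' t
  have he : (Matrix.of fun a b : Fin N =>
      (x.submatrix (Equiv.uniqueProd (Fin N) (Fin 1)) (Equiv.uniqueProd (Fin N) (Fin 1)))
        ((0:Fin 1), a) ((0:Fin 1), b)) = x := by
    ext a b; simp [Matrix.submatrix_apply]
  have := entry_nonneg_of_psd_one h
  simp [he] at this
  exact this

lemma eig_sq {k : ℕ} {M : Matrix (Fin k) (Fin k) ℂ} (hM : M.IsHermitian)
    (hMM : M * M = M) (i : Fin k) :
    hM.eigenvalues i = 0 ∨ hM.eigenvalues i = 1 := by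
  have hv := hM.mulVec_eigenvectorBasis i
  have hv2 : M *ᵥ (M *ᵥ ⇑(hM.eigenvectorBasis i)) =
      (hM.eigenvalues i * hM.eigenvalues i) • ⇑(hM.eigenvectorBasis i) := by
    rw [hv, mulVec_smul, hv, smul_smul]
  rw [Matrix.mulVec_mulVec, hMM, hv] at hv2
  have hne : ⇑(hM.eigenvectorBasis i) ≠ 0 := by
    have := hM.eigenvectorBasis.orthonormal.ne_zero i
    intro hc
    apply this
    ext j
    exact congrFun hc j
  have : (hM.eigenvalues i * hM.eigenvalues i - hM.eigenvalues i) •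
      ⇑(hM.eigenvectorBasis i) = 0 := by
    rw [sub_smul, hv2, sub_self]
  rcases smul_eq_zero.1 this with h | h
  · have h' : hM.eigenvalues i * (hM.eigenvalues i - 1) = 0 := by ring_nf; linarith [h]
    rcases mul_eq_zero.1 h' with h | h
    · exact Or.inl h
    · exact Or.inr (by linarith)
  · exact absurd h hne

lemma trace_eq_sum_eig {k : ℕ} {M : Matrix (Fin k) (Fin k) ℂ} (hM : M.IsHermitian) :
    M.trace = ∑ i, (hM.eigenvalues i : ℂ) := by
  exact hM.trace_eq_sum_eigenvalues

lemma sNorm_proj {N : ℕ} (p : ℝ) (hp : 1 ≤ p) (t : Fin N) :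
    sNorm p (Matrix.single t t (1:ℂ)) = 1 := by
  set a := Matrix.single t t (1:ℂ) with ha
  have haa : aᴴ * a = a := by
    have h1 : aᴴ = a := by
      ext i j
      simp [ha, Matrix.conjTranspose_apply, Matrix.single, and_comm]
    rw [h1, ha, Matrix.single_mul_single_same, one_mul]
  have hM := (Matrix.posSemidef_conjTranspose_mul_self a).1
  have hMM : (aᴴ * a) * (aᴴ * a) = aᴴ * a := by
    rw [haa]; rw [ha, Matrix.single_mul_single_same, one_mul]
  have hp0 : p ≠ 0 := by linarith
  have hsum : ∑ i, Real.sqrt (hM.eigenvalues i) ^ p = ∑ i, hM.eigenvalues i := by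
    refine Finset.sum_congr rfl fun i _ => ?_
    rcases eig_sq hM hMM i with h | h
    · rw [h, Real.sqrt_zero, Real.zero_rpow hp0]
    · rw [h, Real.sqrt_one, Real.one_rpow]
  have htr : (aᴴ * a).trace = 1 := by rw [haa, ha, Matrix.trace_single_eq_same]
  have hsum2 : ∑ i, hM.eigenvalues i = 1 := by
    have h := trace_eq_sum_eig hM
    rw [htr] at h
    have h2 : ((∑ i, hM.eigenvalues i : ℝ) : ℂ) = ((1:ℝ) : ℂ) := by push_cast; rw [← h]
    exact_mod_cast h2
  rw [sNorm, hsum, hsum2, Real.one_rpow]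


lemma sum_rankOne {N : ℕ} (z t : Fin N) (htz : ¬ t = z) (c : ℝ) (hc : 0 < c) :
    (Matrix.of fun a b => (if a = z then (c:ℂ) else if a = t then ((c⁻¹:ℝ):ℂ) else 0)
      * (starRingEnd ℂ) (if b = z then (c:ℂ) else if b = t then ((c⁻¹:ℝ):ℂ) else 0)) +
    (Matrix.of fun a b => (if a = z then (c:ℂ) else if a = t then (-((c⁻¹:ℝ):ℂ)) else 0)
      * (starRingEnd ℂ) (if b = z then (c:ℂ) else if b = t then (-((c⁻¹:ℝ):ℂ)) else 0))
    = ((2*c^2 : ℝ):ℂ) • Matrix.single z z 1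
      + ((2/c^2 : ℝ):ℂ) • Matrix.single t t 1 := by
  have hc0 : (c:ℂ) ≠ 0 := by exact_mod_cast ne_of_gt hc
  ext a b
  simp only [Matrix.add_apply, Matrix.of_apply, Matrix.smul_apply, Matrix.single,
    smul_eq_mul, Matrix.of_apply]
  by_cases ha : a = z <;> by_cases hb : b = z <;>
    by_cases ha' : a = t <;> by_cases hb' : b = t <;>
    simp_all [Complex.conj_ofReal, map_neg, eq_comm] <;>
    push_cast <;> (try field_simp) <;> (try ring)

theorem stmt_18 {N : ℕ} (hN : 0 < N) (p q : ℝ) (hp : 1 ≤ p) (hq : 1 ≤ q)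
    (T S : Matrix (Fin N) (Fin N) ℂ →ₗ[ℂ] (Fin N → ℂ))
    (hT : ∀ (x : Matrix (Fin N) (Fin N) ℂ) (i : Fin N),
      T x i = Matrix.trace
        ((Matrix.single (⟨0, hN⟩ : Fin N) i 1 +
          Matrix.single i (⟨0, hN⟩ : Fin N) 1) * x))
    (hSpT : IsCompletelyPositive (S + T))
    (hSmT : IsCompletelyPositive (S - T))
    (C : ℝ)
    (hC : ∀ x : Matrix (Fin N) (Fin N) ℂ,
      (∑ t : Fin N, ‖S x t‖ ^ q) ^ (1 / q) ≤ C * sNorm p x) :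
    (N : ℝ) ^ (1 / (2 * q)) ≤ C := by
  have hq0 : (0:ℝ) < q := by linarith
  have hq0' : q ≠ 0 := ne_of_gt hq0
  set z : Fin N := ⟨0, hN⟩ with hz
  set E : Fin N → Fin N → Matrix (Fin N) (Fin N) ℂ :=
    fun i j => Matrix.single i j 1 with hE
  -- T in coordinates
  have hTf : ∀ (x : Matrix (Fin N) (Fin N) ℂ) (t : Fin N), T x t = x t z + x z t := by
    intro x t
    rw [hT, add_mul, Matrix.trace_add, trace_stdBasis_mul, trace_stdBasis_mul]
  -- positivity consequences (real parts)
  have h1 : ∀ (x : Matrix (Fin N) (Fin N) ℂ), x.PosSemidef → ∀ t,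
      (T x t).re ≤ (S x t).re := by
    intro x hx t
    have := cp_pos (S - T) hSmT x hx t
    have h' := (Complex.le_def.1 this).1
    simpa [LinearMap.sub_apply, Complex.sub_re] using h'
  have h2 : ∀ (x : Matrix (Fin N) (Fin N) ℂ), x.PosSemidef → ∀ t,
      0 ≤ (S x t).re + (T x t).re := by
    intro x hx t
    have := cp_pos (S + T) hSpT x hx t
    have h' := (Complex.le_def.1 this).1
    simpa [LinearMap.add_apply, Complex.add_re] using h'
  -- the projections are psd
  have hpsdE : ∀ t : Fin N, (E t t).PosSemidef := by
    intro t
    have h := rankOne_psd (fun a : Fin N => if t = a then (1:ℂ) else 0)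
    convert h using 1
    ext a b
    by_cases ha : t = a <;> by_cases hb : t = b <;>
      simp [hE, Matrix.single, ha, hb]
  set β : Fin N → ℝ := fun t => (S (E z z) t).re with hβ
  set γ : Fin N → ℝ := fun t => (S (E t t) t).re with hγ
  have hβdef : ∀ t, β t = (S (E z z) t).re := fun _ => rfl
  have hγdef : ∀ t, γ t = (S (E t t) t).re := fun _ => rfl
  have hTE : ∀ s t : Fin N, (T (E t t) s).re = if t = z ∧ s = z then 2 else 0 := by
    intro s t
    rw [hTf]
    by_cases ht : t = z <;> by_cases hs : s = z <;>
      simp [hE, Matrix.single, ht, hs, eq_comm] <;> norm_num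
  have hβ0 : ∀ t, 0 ≤ β t := by
    intro t
    have h := h1 (E z z) (hpsdE z) t
    rw [hTE t z, ← hβdef t] at h
    by_cases ht : t = z
    · subst ht; simp at h; linarith
    · simpa [ht] using h
  have hγ0 : ∀ t, 0 ≤ γ t := by
    intro t
    have h := h1 (E t t) (hpsdE t) t
    rw [hTE t t, ← hγdef t] at h
    by_cases ht : t = z
    · subst ht; simp at h; linarith
    · simpa [ht] using h
  have hβz : 2 ≤ β z := by
    have h := h1 (E z z) (hpsdE z) z
    rw [hTE z z, ← hβdef z] at h
    simpa using h
  -- key product inequality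
  have hβγ : ∀ t, 1 ≤ β t * γ t := by
    intro t
    by_cases htz : t = z
    · subst htz
      have hgb : γ z = β z := rfl
      rw [hgb]
      nlinarith [hβz]
    · -- the two-parameter family of rank-one psd matrices
      have key : ∀ c : ℝ, 0 < c → 4 * c^2 ≤ 2 * c^4 * β t + 2 * γ t := by
        intro c hc
        have hc0 : (c:ℂ) ≠ 0 := by exact_mod_cast ne_of_gt hc
        set wp : Fin N → ℂ := fun a => if a = z then (c:ℂ) else if a = t then ((c⁻¹:ℝ):ℂ) else 0
          with hwp
        set wm : Fin N → ℂ := fun a => if a = z then (c:ℂ) else if a = t then (-((c⁻¹:ℝ):ℂ)) else 0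
          with hwm
        set xp := Matrix.of fun a b => wp a * (starRingEnd ℂ) (wp b) with hxp
        set xm := Matrix.of fun a b => wm a * (starRingEnd ℂ) (wm b) with hxm
        have hpp : xp.PosSemidef := rankOne_psd wp
        have hpm : xm.PosSemidef := rankOne_psd wm
        have e1 : xp t z = ((c⁻¹:ℝ):ℂ) * (starRingEnd ℂ) ((c:ℝ):ℂ) := by
          simp [hxp, hwp, htz]
        have e2 : xp z t = ((c:ℝ):ℂ) * (starRingEnd ℂ) ((c⁻¹:ℝ):ℂ) := by
          simp [hxp, hwp, htz]
        have f1 : xm t z = (-((c⁻¹:ℝ):ℂ)) * (starRingEnd ℂ) ((c:ℝ):ℂ) := by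
          simp [hxm, hwm, htz]
        have f2 : xm z t = ((c:ℝ):ℂ) * (starRingEnd ℂ) (-((c⁻¹:ℝ):ℂ)) := by
          simp [hxm, hwm, htz]
        have hTp : T xp t = 2 := by
          rw [hTf, e1, e2, Complex.conj_ofReal, Complex.conj_ofReal]
          push_cast
          field_simp
          norm_num
        have hTm : T xm t = -2 := by
          rw [hTf, f1, f2, map_neg, Complex.conj_ofReal, Complex.conj_ofReal]
          push_cast
          field_simp
          ring
        have hp1 : 2 ≤ (S xp t).re := by
          have h := h1 xp hpp t
          rw [hTp] at h
          simpa using h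
        have hm1 : 2 ≤ (S xm t).re := by
          have h := h2 xm hpm t
          rw [hTm] at h
          norm_num at h
          linarith
        have hsum : xp + xm = ((2*c^2 : ℝ):ℂ) • E z z + ((2/c^2 : ℝ):ℂ) • E t t :=
          sum_rankOne z t htz c hc
        have hS : S xp t + S xm t
            = ((2*c^2 : ℝ):ℂ) * S (E z z) t + ((2/c^2 : ℝ):ℂ) * S (E t t) t := by
          have h := congrArg (fun y => S y t) hsum
          simpa [map_add, _root_.map_smul, smul_eq_mul] using h
        have hre := congrArg Complex.re hS
        rw [Complex.add_re, Complex.add_re, Complex.re_ofReal_mul, Complex.re_ofReal_mul] at hre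
        rw [← hβdef t, ← hγdef t] at hre
        have hA : 4 ≤ 2*c^2 * β t + 2/c^2 * γ t := by
          rw [← hre]; linarith
        have hA2 : 4 * c^2 ≤ (2*c^2 * β t + 2/c^2 * γ t) * c^2 :=
          mul_le_mul_of_nonneg_right hA (sq_nonneg c)
        have hc2 : c^2 ≠ 0 := by positivity
        have heq : (2*c^2 * β t + 2/c^2 * γ t) * c^2 = 2*c^4 * β t + 2 * γ t := by
          field_simp
        rw [heq] at hA2
        exact hA2
      rcases eq_or_lt_of_le (hβ0 t) with hb | hb
      · exfalso
        have hg := hγ0 t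
        have hcpos : (0:ℝ) < Real.sqrt (γ t + 1) := Real.sqrt_pos.2 (by linarith)
        have hsq : Real.sqrt (γ t + 1) ^ 2 = γ t + 1 := Real.sq_sqrt (by linarith)
        have h := key _ hcpos
        rw [hsq, ← hb] at h
        nlinarith
      · have hcpos : (0:ℝ) < Real.sqrt (β t)⁻¹ := Real.sqrt_pos.2 (by positivity)
        have hsq : Real.sqrt (β t)⁻¹ ^ 2 = (β t)⁻¹ := Real.sq_sqrt (by positivity)
        have hc4 : Real.sqrt (β t)⁻¹ ^ 4 = ((β t)⁻¹)^2 := by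
          rw [show (4:ℕ) = 2*2 from rfl, pow_mul, hsq]
        have h := key _ hcpos
        rw [hsq, hc4] at h
        have hb' : β t ≠ 0 := ne_of_gt hb
        have e : 2 * ((β t)⁻¹)^2 * β t = 2 * (β t)⁻¹ := by
          field_simp
        rw [e] at h
        have hig : (β t)⁻¹ ≤ γ t := by linarith
        calc (1:ℝ) = β t * (β t)⁻¹ := by field_simp
          _ ≤ β t * γ t := by nlinarith
  -- rpow helpers
  have habs_rpow : ∀ a : ℝ, 0 ≤ a → (a ^ q) ^ (1/q) = a := by
    intro a ha
    rw [← Real.rpow_mul ha, mul_one_div_cancel hq0', Real.rpow_one]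
  -- γ t ≤ C
  have hγC : ∀ t, γ t ≤ C := by
    intro t
    have h := hC (E t t)
    rw [hE] at h
    rw [sNorm_proj p hp t, mul_one] at h
    have h1' : ‖S (Matrix.single t t 1) t‖ ^ q
        ≤ ∑ s, ‖S (Matrix.single t t 1) s‖ ^ q :=
      Finset.single_le_sum (fun s _ => Real.rpow_nonneg (norm_nonneg _) q)
        (Finset.mem_univ t)
    have h2' : (‖S (Matrix.single t t 1) t‖ ^ q) ^ (1/q)
        ≤ (∑ s, ‖S (Matrix.single t t 1) s‖ ^ q) ^ (1/q) :=
      Real.rpow_le_rpow (Real.rpow_nonneg (norm_nonneg _) q) h1' (by positivity)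
    rw [habs_rpow _ (norm_nonneg _)] at h2'
    have h3' : γ t ≤ ‖S (Matrix.single t t 1) t‖ := by
      have := Complex.re_le_norm (S (Matrix.single t t 1) t)
      simpa [hγ, hE] using this
    linarith
  have hC2 : (2:ℝ) ≤ C := by
    have hgz : γ z = β z := rfl
    have := hγC z
    rw [hgz] at this
    linarith
  have hC0 : (0:ℝ) < C := by linarith
  -- 1/C ≤ β t
  have hβC : ∀ t, 1/C ≤ β t := by
    intro t
    rw [div_le_iff₀ hC0]
    nlinarith [hβγ t, hγC t, hβ0 t, hγ0 t]
  -- sum lower bound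
  have hsumβ : (N:ℝ) * (1/C)^q ≤ ∑ t, β t ^ q := by
    have h1' : ∀ t : Fin N, (1/C : ℝ)^q ≤ β t ^ q := fun t =>
      Real.rpow_le_rpow (by positivity) (hβC t) (le_of_lt hq0)
    calc (N:ℝ) * (1/C)^q = ∑ _t : Fin N, (1/C : ℝ)^q := by
          rw [Finset.sum_const, Finset.card_univ, Fintype.card_fin, nsmul_eq_mul]
      _ ≤ ∑ t, β t ^ q := Finset.sum_le_sum (fun t _ => h1' t)
  -- final bound from hC at E z z
  have hfin : ((N:ℝ) * (1/C)^q) ^ (1/q) ≤ C := by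
    have h := hC (E z z)
    rw [hE] at h
    rw [sNorm_proj p hp z, mul_one] at h
    have h1' : ∑ t, β t ^ q ≤ ∑ t, ‖S (Matrix.single z z 1) t‖ ^ q := by
      refine Finset.sum_le_sum (fun t _ => ?_)
      refine Real.rpow_le_rpow (hβ0 t) ?_ (le_of_lt hq0)
      have := Complex.re_le_norm (S (Matrix.single z z 1) t)
      simpa [hβ, hE] using this
    have h2' : ((N:ℝ) * (1/C)^q) ^ (1/q)
        ≤ (∑ t, ‖S (Matrix.single z z 1) t‖ ^ q) ^ (1/q) :=
      Real.rpow_le_rpow (by positivity) (le_trans hsumβ h1') (by positivity)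
    linarith
  have hmul : ((N:ℝ) * (1/C)^q) ^ (1/q) = (N:ℝ)^(1/q) * (1/C) := by
    rw [Real.mul_rpow (by positivity) (by positivity), habs_rpow _ (by positivity)]
  rw [hmul] at hfin
  have hNC : (N:ℝ)^(1/q) ≤ C^2 := by
    rw [mul_one_div] at hfin
    rw [div_le_iff₀ hC0] at hfin
    nlinarith
  have hNpos : (0:ℝ) < (N:ℝ) := by exact_mod_cast hN
  have hexp : 1/(2*q) + 1/(2*q) = 1/q := by
    field_simp
    norm_num
  have hsq : ((N:ℝ) ^ (1/(2*q)))^2 = (N:ℝ)^(1/q) := by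
    rw [sq, ← Real.rpow_add hNpos, hexp]
  have : ((N:ℝ) ^ (1/(2*q)))^2 ≤ C^2 := by rw [hsq]; exact hNC
  exact (pow_le_pow_iff_left₀ (by positivity) (le_of_lt hC0) (by norm_num)).1 this
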